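/- arXiv:math/0503645 — 3 statements merged into one kernel-verified Lean document; each statement's English description precedes it below -/
import Mathlib

section
/- Let n ≥ 2 and let R be a Kähler curvature-type tensor on ℂ^n whose traceless bisectional curvature operator is 2-nonnegative. Then Re(R(i,i,i,i)) + Re(R(j,j,j,j)) ≥ 0 for all indices i ≠ j; consequently Σ_{k=1}^n Re(R(k,k,k,k)) ≥ 0 and the scalar curvature satisfies r ≥ 0. -/
open BigOperators Matrix

/-- A Kähler curvature-type tensor on `ℂ^n`: `R i j k l` stands for `R_{i j̄ k l̄}` in a
unitary frame, with the symmetries `R_{i j̄ k l̄} = R_{k j̄ i l̄}`, `R_{i j̄ k l̄} = R_{i l̄ k j̄}`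
and the reality condition `conj R_{i j̄ k l̄} = R_{j ī l k̄}`. -/
def IsKahlerCurvTensor {n : ℕ} (R : Fin n → Fin n → Fin n → Fin n → ℂ) : Prop :=
  (∀ i j k l, R i j k l = R k j i l) ∧
  (∀ i j k l, R i j k l = R i l k j) ∧
  (∀ i j k l, starRingEnd ℂ (R i j k l) = R j i l k)

/-- The Ricci tensor `Ric(i,j) = Σ_k R(i,j,k,k)` of a curvature-type tensor. -/
noncomputable def ricci {n : ℕ} (R : Fin n → Fin n → Fin n → Fin n → ℂ) (i j : Fin n) : ℂ :=
  ∑ k, R i j k k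

/-- The scalar curvature `r = Σ_i Re(Ric(i,i))` of a curvature-type tensor. -/
noncomputable def scalarCurv {n : ℕ} (R : Fin n → Fin n → Fin n → Fin n → ℂ) : ℝ :=
  ∑ i, (ricci R i i).re

/-- `η` belongs to `H₀`, the real vector space of trace-free Hermitian `n × n` matrices
(identified with traceless real `(1,1)`-forms). -/
def MemH0 {n : ℕ} (η : Matrix (Fin n) (Fin n) ℂ) : Prop :=
  η.IsHermitian ∧ η.trace = 0

/-- The inner product `⟨η,τ⟩ = Re Tr(ητ)` on Hermitian matrices. -/
noncomputable def h0Inner {n : ℕ} (η τ : Matrix (Fin n) (Fin n) ℂ) : ℝ :=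
  (Matrix.trace (η * τ)).re

/-- The (real-valued) symmetric bilinear form `ℛ(η,τ) = Σ R(i,j,k,l)·η(j,i)·τ(l,k)`
induced by a curvature-type tensor on Hermitian matrices. -/
noncomputable def curvForm {n : ℕ} (R : Fin n → Fin n → Fin n → Fin n → ℂ)
    (η τ : Matrix (Fin n) (Fin n) ℂ) : ℝ :=
  (∑ i, ∑ j, ∑ k, ∑ l, R i j k l * η j i * τ l k).re

/-- The traceless bisectional curvature operator of `R` is nonnegative:
`ℛ(η,η) ≥ 0` for every `η ∈ H₀`. -/
def NonnegTBC {n : ℕ} (R : Fin n → Fin n → Fin n → Fin n → ℂ) : Prop :=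
  ∀ η : Matrix (Fin n) (Fin n) ℂ, MemH0 η → 0 ≤ curvForm R η η

/-- The traceless bisectional curvature operator of `R` is 2-nonnegative:
`ℛ(η,η) + ℛ(τ,τ) ≥ 0` for all orthonormal pairs `η, τ ∈ H₀`. -/
def TwoNonnegTBC {n : ℕ} (R : Fin n → Fin n → Fin n → Fin n → ℂ) : Prop :=
  ∀ η τ : Matrix (Fin n) (Fin n) ℂ, MemH0 η → MemH0 τ →
    h0Inner η η = 1 → h0Inner τ τ = 1 → h0Inner η τ = 0 →
    0 ≤ curvForm R η η + curvForm R τ τ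

lemma quad_combo {n : ℕ} (R : Fin n → Fin n → Fin n → Fin n → ℂ)
    (p1 q1 p2 q2 r1 s1 r2 s2 : Fin n) (x1 x2 y1 y2 : ℂ) :
    (∑ i, ∑ j, ∑ k, ∑ l, R i j k l *
        (Matrix.single p1 q1 x1 + Matrix.single p2 q2 x2) j i *
        (Matrix.single r1 s1 y1 + Matrix.single r2 s2 y2) l k)
    = R q1 p1 s1 r1 * x1 * y1 + R q1 p1 s2 r2 * x1 * y2
      + R q2 p2 s1 r1 * x2 * y1 + R q2 p2 s2 r2 * x2 * y2 := by
  simp [Matrix.single, Matrix.of_apply, ite_and, Matrix.add_apply, mul_add, add_mul, mul_ite, ite_mul,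
    Finset.sum_add_distrib, Finset.sum_ite_eq, Finset.sum_ite_eq']
  ring

lemma ctStd {n : ℕ} (p q : Fin n) (x : ℂ) :
    (Matrix.single p q x).conjTranspose = Matrix.single q p (starRingEnd ℂ x) := by
  ext a b
  simp [Matrix.conjTranspose_apply, Matrix.single, ite_and]
  split_ifs <;> simp_all

lemma trace_pair {n : ℕ} (p1 q1 r1 s1 : Fin n) (x1 y1 : ℂ) :
    Matrix.trace ((Matrix.single p1 q1 x1) * (Matrix.single r1 s1 y1))
    = (if q1 = r1 ∧ s1 = p1 then x1 * y1 else 0) := by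
  simp [Matrix.trace, Matrix.mul_apply, Matrix.diag, Matrix.single, Matrix.of_apply, ite_and, mul_ite, ite_mul,
    Finset.sum_ite_eq, Finset.sum_ite_eq']
  split_ifs <;> simp_all

lemma trace_combo {n : ℕ} (p1 q1 p2 q2 r1 s1 r2 s2 : Fin n) (x1 x2 y1 y2 : ℂ) :
    Matrix.trace ((Matrix.single p1 q1 x1 + Matrix.single p2 q2 x2) *
        (Matrix.single r1 s1 y1 + Matrix.single r2 s2 y2))
    = (if q1 = r1 ∧ s1 = p1 then x1 * y1 else 0)
      + (if q1 = r2 ∧ s2 = p1 then x1 * y2 else 0)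
      + (if q2 = r1 ∧ s1 = p2 then x2 * y1 else 0)
      + (if q2 = r2 ∧ s2 = p2 then x2 * y2 else 0) := by
  rw [add_mul, mul_add, mul_add, Matrix.trace_add, Matrix.trace_add, Matrix.trace_add,
    trace_pair, trace_pair, trace_pair, trace_pair]
  ring

lemma reh (z : ℂ) (x : ℝ) : (z * ((x : ℝ) : ℂ)).re = z.re * x := by
  simp [Complex.mul_re]

lemma pair_key {n : ℕ} (R : Fin n → Fin n → Fin n → Fin n → ℂ)
    (hR : IsKahlerCurvTensor R) (h2 : TwoNonnegTBC R) (i j : Fin n) (hij : i ≠ j) :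
    0 ≤ (R i i i i).re + (R j j j j).re ∧ 0 ≤ (R i i j j).re + (R j j i i).re := by
  obtain ⟨hs1, hs2, hs3⟩ := hR
  set c : ℝ := (Real.sqrt 2)⁻¹ with hcdef
  set cc : ℂ := (c : ℂ) with hccdef
  have hc : c * c = 1/2 := by
    rw [hcdef, ← mul_inv, Real.mul_self_sqrt (by norm_num : (0:ℝ) ≤ 2)]
    norm_num
  have hcc : cc * cc = ((1/2 : ℝ) : ℂ) := by
    rw [hccdef, ← Complex.ofReal_mul, hc]
  set A : ℂ := cc * Complex.I with hAdef
  have hA1 : A * A = -((1/2 : ℝ) : ℂ) := by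
    rw [show A * A = (cc * cc) * (Complex.I * Complex.I) from by rw [hAdef]; ring,
      Complex.I_mul_I, hcc]; ring
  have hA2 : A * (-A) = ((1/2 : ℝ) : ℂ) := by rw [mul_neg, hA1]; ring
  have hA3 : (-A) * A = ((1/2 : ℝ) : ℂ) := by rw [neg_mul, hA1]; ring
  have hA4 : (-A) * (-A) = -((1/2 : ℝ) : ℂ) := by rw [neg_mul_neg, hA1]
  set η := Matrix.single i i cc + Matrix.single j j (-cc) with hηdef
  set σ := Matrix.single i j cc + Matrix.single j i cc with hσdef
  set ρ := Matrix.single i j A + Matrix.single j i (-A) with hρdef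
  have hconjcc : starRingEnd ℂ cc = cc := Complex.conj_ofReal c
  have hconjA : starRingEnd ℂ A = -A := by
    rw [hAdef, _root_.map_mul, Complex.conj_ofReal, Complex.conj_I]; ring
  have hηmem : MemH0 η := by
    constructor
    · show η.conjTranspose = η
      rw [hηdef, conjTranspose_add, ctStd, ctStd, hconjcc, map_neg, hconjcc]
    · rw [hηdef, Matrix.trace_add, Matrix.trace_single_eq_same,
        Matrix.trace_single_eq_same]; ring
  have hσmem : MemH0 σ := by
    constructor
    · show σ.conjTranspose = σ
      rw [hσdef, conjTranspose_add, ctStd, ctStd, hconjcc]; exact add_comm _ _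
    · rw [hσdef, Matrix.trace_add, Matrix.trace_single_eq_of_ne _ _ _ hij,
        Matrix.trace_single_eq_of_ne _ _ _ hij.symm]; ring
  have hρmem : MemH0 ρ := by
    constructor
    · show ρ.conjTranspose = ρ
      rw [hρdef, conjTranspose_add, ctStd, ctStd, hconjA, map_neg, hconjA, neg_neg]
      exact add_comm _ _
    · rw [hρdef, Matrix.trace_add, Matrix.trace_single_eq_of_ne _ _ _ hij,
        Matrix.trace_single_eq_of_ne _ _ _ hij.symm]; ring
  have hηη : h0Inner η η = 1 := by
    rw [h0Inner, hηdef, trace_combo]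
    simp [hij, hij.symm]
    rw [show cc.re * cc.re - cc.im * cc.im + (cc.re * cc.re - cc.im * cc.im)
        = 2 * (cc * cc).re from by rw [Complex.mul_re]; ring, hcc]
    norm_num
  have hσσ : h0Inner σ σ = 1 := by
    rw [h0Inner, hσdef, trace_combo]
    simp [hij, hij.symm]
    rw [show cc.re * cc.re - cc.im * cc.im + (cc.re * cc.re - cc.im * cc.im)
        = 2 * (cc * cc).re from by rw [Complex.mul_re]; ring, hcc]
    norm_num
  have hρρ : h0Inner ρ ρ = 1 := by
    rw [h0Inner, hρdef, trace_combo]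
    simp [hij, hij.symm, hA2, hA3]
    norm_num
  have hησ : h0Inner η σ = 0 := by
    rw [h0Inner, hηdef, hσdef, trace_combo]
    simp [hij, hij.symm]
  have hηρ : h0Inner η ρ = 0 := by
    rw [h0Inner, hηdef, hρdef, trace_combo]
    simp [hij, hij.symm]
  have hσρ : h0Inner σ ρ = 0 := by
    rw [h0Inner, hσdef, hρdef, trace_combo]
    simp [hij, hij.symm]
  have cη : curvForm R η η
      = ((R i i i i).re - (R i i j j).re - (R j j i i).re + (R j j j j).re) * (1/2) := by
    rw [curvForm, hηdef, quad_combo,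
      show R i i i i * cc * cc + R i i j j * cc * (-cc) + R j j i i * (-cc) * cc
          + R j j j j * (-cc) * (-cc)
        = (R i i i i - R i i j j - R j j i i + R j j j j) * (cc * cc) from by ring, hcc, reh]
    simp [Complex.add_re, Complex.sub_re]
  have cσ : curvForm R σ σ
      = ((R j i j i).re + (R j i i j).re + (R i j j i).re + (R i j i j).re) * (1/2) := by
    rw [curvForm, hσdef, quad_combo,
      show R j i j i * cc * cc + R j i i j * cc * cc + R i j j i * cc * cc
          + R i j i j * cc * cc
        = (R j i j i + R j i i j + R i j j i + R i j i j) * (cc * cc) from by ring, hcc, reh]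
    simp [Complex.add_re]
  have cρ : curvForm R ρ ρ
      = (-(R j i j i).re + (R j i i j).re + (R i j j i).re - (R i j i j).re) * (1/2) := by
    rw [curvForm, hρdef, quad_combo,
      show R j i j i * A * A + R j i i j * A * (-A) + R i j j i * (-A) * A
          + R i j i j * (-A) * (-A)
        = (-(R j i j i) + R j i i j + R i j j i - R i j i j) * (cc * cc)
            * (-(Complex.I * Complex.I)) from by rw [hAdef]; ring,
      Complex.I_mul_I, hcc]
    rw [show ((-(R j i j i) + R j i i j + R i j j i - R i j i j) * ((1/2:ℝ):ℂ) * (-(-1)) : ℂ)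
        = (-(R j i j i) + R j i i j + R i j j i - R i j i j) * ((1/2:ℝ):ℂ) from by ring, reh]
    simp [Complex.add_re, Complex.sub_re, Complex.neg_re]
  have hreal1 : (R j i i j).re = (R i i j j).re := by rw [hs1 j i i j]
  have hreal2 : (R i j j i).re = (R j j i i).re := by rw [hs1 i j j i]
  have hreal3 : (R j i j i).re = (R i j i j).re := by
    rw [← hs3 j i j i, Complex.conj_re]
  have I1 := h2 η σ hηmem hσmem hηη hσσ hησ
  have I2 := h2 η ρ hηmem hρmem hηη hρρ hηρ
  have I3 := h2 σ ρ hσmem hρmem hσσ hρρ hσρ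
  constructor
  · rw [cη, cσ] at I1; rw [cη, cρ] at I2; linarith
  · rw [cσ, cρ] at I3; linarith

/-- From the case analysis in the proof of Theorem 1.2: under 2-nonnegativity of the
traceless bisectional curvature operator, `Re R(i,i,i,i) + Re R(j,j,j,j) ≥ 0` for `i ≠ j`;
consequently the sum of the holomorphic sectional curvatures and the scalar curvature are
nonnegative. -/
theorem holSec_pair_sum_nonneg_of_twoNonnegTBC (n : ℕ) (hn : 2 ≤ n)
    (R : Fin n → Fin n → Fin n → Fin n → ℂ)
    (hR : IsKahlerCurvTensor R) (h2 : TwoNonnegTBC R) :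
    (∀ i j : Fin n, i ≠ j → 0 ≤ (R i i i i).re + (R j j j j).re) ∧
    0 ≤ ∑ k, (R k k k k).re ∧ 0 ≤ scalarCurv R := by
  have key : ∀ i j : Fin n, i ≠ j →
      0 ≤ (R i i i i).re + (R j j j j).re ∧ 0 ≤ (R i i j j).re + (R j j i i).re :=
    fun i j hij => pair_key R hR h2 i j hij
  have part2 : 0 ≤ ∑ k, (R k k k k).re := by
    have hT : 0 ≤ ∑ i : Fin n, ∑ k : Fin n,
        (if i = k then (0:ℝ) else (R i i i i).re + (R k k k k).re) := by
      refine Finset.sum_nonneg fun i _ => Finset.sum_nonneg fun k _ => ?_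
      split_ifs with h
      · exact le_refl 0
      · exact (key i k h).1
    have hTeq : ∑ i : Fin n, ∑ k : Fin n,
        (if i = k then (0:ℝ) else (R i i i i).re + (R k k k k).re)
        = (2 * n - 2) * ∑ k, (R k k k k).re := by
      have inner : ∀ i : Fin n, ∑ k : Fin n,
          (if i = k then (0:ℝ) else (R i i i i).re + (R k k k k).re)
          = (n : ℝ) * (R i i i i).re + (∑ k, (R k k k k).re) - 2 * (R i i i i).re := by
        intro i
        have hrw : ∀ k : Fin n, (if i = k then (0:ℝ) else (R i i i i).re + (R k k k k).re)
            = ((R i i i i).re + (R k k k k).re)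
              - (if i = k then (R i i i i).re + (R k k k k).re else 0) := by
          intro k; split_ifs <;> ring
        rw [Finset.sum_congr rfl fun k _ => hrw k, Finset.sum_sub_distrib,
          Finset.sum_add_distrib, Finset.sum_ite_eq, Finset.sum_const, Finset.card_univ,
          Fintype.card_fin, nsmul_eq_mul]
        simp
        ring
      rw [Finset.sum_congr rfl fun i _ => inner i]
      simp [Finset.sum_sub_distrib, Finset.sum_add_distrib, Finset.sum_const,
        Finset.card_univ, ← Finset.mul_sum, nsmul_eq_mul]
      ring
    have hn' : (2:ℝ) ≤ (n:ℝ) := by exact_mod_cast hn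
    rw [hTeq] at hT
    by_contra hcon
    push_neg at hcon
    nlinarith
  refine ⟨fun i j hij => (key i j hij).1, part2, ?_⟩
  have hscal : scalarCurv R = (∑ k, (R k k k k).re)
      + ∑ i : Fin n, ∑ k : Fin n, (if i = k then (0:ℝ) else (R i i k k).re) := by
    rw [scalarCurv]
    simp only [ricci, Complex.re_sum]
    rw [← Finset.sum_add_distrib]
    refine Finset.sum_congr rfl fun i _ => ?_
    have hrw : ∀ k : Fin n, (R i i k k).re
        = (if i = k then (R k k k k).re else 0) + (if i = k then (0:ℝ) else (R i i k k).re) := by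
      intro k
      split_ifs with h
      · subst h; ring
      · ring
    rw [Finset.sum_congr rfl fun k _ => hrw k, Finset.sum_add_distrib, Finset.sum_ite_eq]
    simp
  have hswap : ∑ i : Fin n, ∑ k : Fin n, (if i = k then (0:ℝ) else (R i i k k).re)
      = ∑ i : Fin n, ∑ k : Fin n, (if i = k then (0:ℝ) else (R k k i i).re) := by
    rw [Finset.sum_comm]
    refine Finset.sum_congr rfl fun i _ => Finset.sum_congr rfl fun k _ => ?_
    exact if_congr eq_comm rfl rfl
  have hS2 : 0 ≤ ∑ i : Fin n, ∑ k : Fin n, (if i = k then (0:ℝ) else (R i i k k).re) := by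
    have h2S : 0 ≤ ∑ i : Fin n, ∑ k : Fin n,
        (if i = k then (0:ℝ) else (R i i k k).re + (R k k i i).re) := by
      refine Finset.sum_nonneg fun i _ => Finset.sum_nonneg fun k _ => ?_
      split_ifs with h
      · exact le_refl 0
      · exact (key i k h).2
    have hsplit : ∑ i : Fin n, ∑ k : Fin n,
        (if i = k then (0:ℝ) else (R i i k k).re + (R k k i i).re)
        = (∑ i : Fin n, ∑ k : Fin n, (if i = k then (0:ℝ) else (R i i k k).re))
          + ∑ i : Fin n, ∑ k : Fin n, (if i = k then (0:ℝ) else (R k k i i).re) := by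
      rw [← Finset.sum_add_distrib]
      refine Finset.sum_congr rfl fun i _ => ?_
      rw [← Finset.sum_add_distrib]
      refine Finset.sum_congr rfl fun k _ => ?_
      split_ifs <;> ring
    rw [hsplit, ← hswap] at h2S
    linarith
  rw [hscal]
  linarith
end

section
/- Let n ≥ 2 and let S : Fin n × Fin n × Fin n × Fin n → ℂ satisfy the pair symmetry S(i,j,k,l) = S(k,l,i,j) and the trace-free condition Σ_a S(a,a,c,d) = 0 for all c, d. If Σ_{i,j,k,l} S(i,j,k,l)·η(j,i)·τ(l,k) = 0 for all trace-zero Hermitian n×n matrices η, τ, then S(i,j,k,l) = 0 for all indices. -/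
open BigOperators

lemma sum_std_aux {n : ℕ} (T : Fin n → Fin n → ℂ) (p q : Fin n) (c : ℂ) :
    ∑ k, ∑ l, T k l * (Matrix.single p q c) l k = T q p * c := by
  simp [Matrix.single, Finset.sum_ite_eq, ite_and, mul_ite]

lemma std_herm {n : ℕ} (p q : Fin n) (c : ℂ) :
    (Matrix.single p q c + Matrix.single q p (starRingEnd ℂ c)).IsHermitian := by
  ext i j
  simp only [Matrix.conjTranspose_apply, Matrix.add_apply, Matrix.single, Matrix.of_apply,
    star_add, apply_ite star, star_zero, Complex.star_def, Complex.conj_conj]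
  by_cases h1 : p = j <;> by_cases h2 : q = i <;> by_cases h3 : q = j <;> by_cases h4 : p = i <;>
    simp_all [add_comm]

lemma std_tr {n : ℕ} (p q : Fin n) (c d : ℂ) (h : q ≠ p) :
    (Matrix.single p q c + Matrix.single q p d).trace = 0 := by
  rw [Matrix.trace_add, Matrix.trace_single_eq_of_ne _ _ _ h.symm,
    Matrix.trace_single_eq_of_ne _ _ _ h, add_zero]

lemma sum4_comm {n : ℕ} (f : Fin n → Fin n → Fin n → Fin n → ℂ) :
    ∑ i, ∑ j, ∑ k, ∑ l, f i j k l = ∑ k, ∑ l, ∑ i, ∑ j, f i j k l := by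
  conv_lhs => enter [2, i]; rw [Finset.sum_comm]
  rw [Finset.sum_comm]
  conv_lhs => enter [2, k]; enter [2, i]; rw [Finset.sum_comm]
  conv_lhs => enter [2, k]; rw [Finset.sum_comm]

lemma sum_std2 {n : ℕ} (T : Fin n → Fin n → ℂ) (p q p' q' : Fin n) (c c' : ℂ) :
    ∑ k, ∑ l, T k l * (Matrix.single p q c + Matrix.single p' q' c') l k
      = T q p * c + T q' p' * c' := by
  simp only [Matrix.add_apply, mul_add, Finset.sum_add_distrib, sum_std_aux]

lemma std_herm_diag {n : ℕ} (p q : Fin n) :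
    (Matrix.single p p (1:ℂ) + Matrix.single q q (-1)).IsHermitian := by
  ext i j
  simp only [Matrix.conjTranspose_apply, Matrix.add_apply, Matrix.single, Matrix.of_apply,
    star_add, apply_ite star, star_zero, star_one, star_neg]
  by_cases h1 : p = j <;> by_cases h2 : q = i <;> by_cases h3 : q = j <;> by_cases h4 : p = i <;>
    simp_all

lemma key {n : ℕ} (hn : 2 ≤ n) (T : Fin n → Fin n → ℂ)
    (h : ∀ τ : Matrix (Fin n) (Fin n) ℂ, τ.IsHermitian → τ.trace = 0 →
      ∑ k, ∑ l, T k l * τ l k = 0)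
    (htr : ∑ k, T k k = 0) : ∀ k l, T k l = 0 := by
  have hdiag : ∀ k, T k k = 0 := by
    intro k
    have hall : ∀ m, T m m = T k k := by
      intro m
      by_cases hm : m = k
      · rw [hm]
      · have h1 := h (Matrix.single k k (1:ℂ) + Matrix.single m m (-1))
          (std_herm_diag k m) (by
            rw [Matrix.trace_add, Matrix.trace_single_eq_same, Matrix.trace_single_eq_same]
            ring)
        rw [sum_std2] at h1
        have h2 : T k k - T m m = 0 := by linear_combination h1
        linear_combination -h2
    have hsum : (n : ℂ) * T k k = 0 := by
      calc (n : ℂ) * T k k = ∑ _m : Fin n, T k k := by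
            rw [Finset.sum_const, Finset.card_univ, Fintype.card_fin, nsmul_eq_mul]
        _ = ∑ m, T m m := by exact Finset.sum_congr rfl fun m _ => (hall m).symm
        _ = 0 := htr
    have hne : (n : ℂ) ≠ 0 := by
      have : n ≠ 0 := by omega
      exact_mod_cast this
    exact (mul_eq_zero.mp hsum).resolve_left hne
  intro k l
  by_cases hkl : k = l
  · rw [hkl]; exact hdiag l
  have h1 := h (Matrix.single l k (1:ℂ) + Matrix.single k l (1:ℂ))
    (by simpa using std_herm l k 1) (std_tr l k 1 1 hkl)
  have h2 := h (Matrix.single l k Complex.I + Matrix.single k l (-Complex.I))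
    (by simpa [Complex.conj_I] using std_herm l k Complex.I) (std_tr l k _ _ hkl)
  rw [sum_std2] at h1 h2
  have hI : Complex.I ≠ 0 := Complex.I_ne_zero
  have e1 : T k l + T l k = 0 := by linear_combination h1
  have e2 : T k l - T l k = 0 := by
    have : Complex.I * (T k l - T l k) = 0 := by linear_combination h2
    exact (mul_eq_zero.mp this).resolve_left hI
  linear_combination (e1 + e2) / 2

/-- Part (2) of the proof of Theorem 1.2: a 4-index tensor `S` on `ℂ^n` with the pair
symmetry `S(i,j,k,l) = S(k,l,i,j)` and trace-free in its first pair of indices, whose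
bilinear form vanishes on all pairs of trace-zero Hermitian matrices, is identically zero. -/
theorem traceless_tensor_eq_zero_of_form_eq_zero (n : ℕ) (hn : 2 ≤ n)
    (S : Fin n → Fin n → Fin n → Fin n → ℂ)
    (hpair : ∀ i j k l, S i j k l = S k l i j)
    (htr : ∀ c d : Fin n, ∑ a, S a a c d = 0)
    (hvanish : ∀ η τ : Matrix (Fin n) (Fin n) ℂ, η.IsHermitian → τ.IsHermitian →
      η.trace = 0 → τ.trace = 0 →
      (∑ i, ∑ j, ∑ k, ∑ l, S i j k l * η j i * τ l k) = 0) :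
    ∀ i j k l, S i j k l = 0 := by
  have stepA : ∀ η : Matrix (Fin n) (Fin n) ℂ, η.IsHermitian → η.trace = 0 →
      ∀ k l, (∑ i, ∑ j, S i j k l * η j i) = 0 := by
    intro η hη hηt
    refine key hn (fun k l => ∑ i, ∑ j, S i j k l * η j i) ?_ ?_
    · intro τ hτ hτt
      have H := hvanish η τ hη hτ hηt hτt
      rw [sum4_comm] at H
      simpa only [Finset.sum_mul] using H
    · have hz : ∀ i j : Fin n, ∑ k, S i j k k = 0 := fun i j => by
        calc ∑ k, S i j k k = ∑ k, S k k i j :=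
              Finset.sum_congr rfl fun k _ => hpair i j k k
          _ = 0 := htr i j
      calc ∑ k, ∑ i, ∑ j, S i j k k * η j i
          = ∑ i, ∑ k, ∑ j, S i j k k * η j i := Finset.sum_comm
        _ = ∑ i, ∑ j, ∑ k, S i j k k * η j i := by
            exact Finset.sum_congr rfl fun i _ => Finset.sum_comm
        _ = ∑ i, ∑ j, (∑ k, S i j k k) * η j i := by
            simp only [Finset.sum_mul]
        _ = 0 := by simp [hz]
  intro i j k l
  exact key hn (fun a b => S a b k l) (fun η hη hηt => stepA η hη hηt k l) (htr k l) i j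
end

section
/- There exists a constant C > 0 depending only on n with the following property: for every n ≥ 2 and every tensor S : Fin n × Fin n × Fin n × Fin n → ℂ satisfying the pair symmetry S(i,j,k,l) = S(k,l,i,j), the reality condition conj(S(i,j,k,l)) = S(j,i,l,k), and the trace-free condition Σ_a S(a,a,c,d) = 0 for all c, d, one has |S(i,j,k,l)| ≤ C · sup { |Σ_{a,b,c,d} S(a,b,c,d)·η(b,a)·η(d,c)| : η ∈ H₀, ⟨η,η⟩ = 1 } for all indices i, j, k, l. -/
open BigOperators

namespace TensorAux

open Matrix

variable {n : ℕ}

/-- The bilinear form associated to the tensor `S`. -/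
noncomputable def Bq (S : Fin n → Fin n → Fin n → Fin n → ℂ)
    (η τ : Matrix (Fin n) (Fin n) ℂ) : ℂ :=
  ∑ a, ∑ b, ∑ c, ∑ d, S a b c d * η b a * τ d c

/-- entrywise squared norm -/
noncomputable def Nn (η : Matrix (Fin n) (Fin n) ℂ) : ℝ := ∑ a, ∑ b, Complex.normSq (η a b)

section Bilinear

variable (S : Fin n → Fin n → Fin n → Fin n → ℂ) (η η' τ τ' : Matrix (Fin n) (Fin n) ℂ)

lemma Bq_add_left : Bq S (η + η') τ = Bq S η τ + Bq S η' τ := by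
  simp only [Bq, Matrix.add_apply, mul_add, add_mul, Finset.sum_add_distrib]

lemma Bq_add_right : Bq S η (τ + τ') = Bq S η τ + Bq S η τ' := by
  simp only [Bq, Matrix.add_apply, mul_add, add_mul, Finset.sum_add_distrib]

lemma Bq_sub_left : Bq S (η - η') τ = Bq S η τ - Bq S η' τ := by
  simp only [Bq, Matrix.sub_apply, mul_sub, sub_mul, Finset.sum_sub_distrib]

lemma Bq_sub_right : Bq S η (τ - τ') = Bq S η τ - Bq S η τ' := by
  simp only [Bq, Matrix.sub_apply, mul_sub, sub_mul, Finset.sum_sub_distrib]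

lemma Bq_smul_left (z : ℂ) : Bq S (z • η) τ = z * Bq S η τ := by
  simp only [Bq, Matrix.smul_apply, smul_eq_mul, Finset.mul_sum]
  refine Finset.sum_congr rfl fun a _ => Finset.sum_congr rfl fun b _ =>
    Finset.sum_congr rfl fun c _ => Finset.sum_congr rfl fun d _ => by ring

lemma Bq_smul_right (z : ℂ) : Bq S η (z • τ) = z * Bq S η τ := by
  simp only [Bq, Matrix.smul_apply, smul_eq_mul, Finset.mul_sum]
  refine Finset.sum_congr rfl fun a _ => Finset.sum_congr rfl fun b _ =>
    Finset.sum_congr rfl fun c _ => Finset.sum_congr rfl fun d _ => by ring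

lemma Qq_add : Bq S (η + τ) (η + τ) = Bq S η η + Bq S η τ + Bq S τ η + Bq S τ τ := by
  rw [Bq_add_left, Bq_add_right, Bq_add_right]; ring

lemma Qq_sub : Bq S (η - τ) (η - τ) = Bq S η η - Bq S η τ - Bq S τ η + Bq S τ τ := by
  rw [Bq_sub_left, Bq_sub_right, Bq_sub_right]; ring

lemma Qq_smul (z : ℂ) : Bq S (z • η) (z • η) = z ^ 2 * Bq S η η := by
  rw [Bq_smul_left, Bq_smul_right]; ring

lemma Bq_one_left (htr : ∀ c d : Fin n, ∑ a, S a a c d = 0) : Bq S 1 τ = 0 := by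
  have h : Bq S 1 τ = ∑ a, ∑ c, ∑ d, S a a c d * τ d c := by
    simp [Bq, Matrix.one_apply, mul_ite, ite_mul, Finset.sum_ite_eq, Finset.sum_ite_eq']
  rw [h, Finset.sum_comm]
  refine Finset.sum_eq_zero fun c _ => ?_
  rw [Finset.sum_comm]
  refine Finset.sum_eq_zero fun d _ => ?_
  rw [← Finset.sum_mul, htr, zero_mul]

lemma Bq_one_right (hsym : ∀ i j k l, S i j k l = S k l i j)
    (htr : ∀ c d : Fin n, ∑ a, S a a c d = 0) : Bq S η 1 = 0 := by
  have h : Bq S η 1 = ∑ a, ∑ b, (∑ c, S c c a b) * η b a := by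
    simp only [Bq, Matrix.one_apply, mul_ite, mul_one, mul_zero, Finset.sum_ite_eq,
      Finset.sum_ite_eq', Finset.mem_univ, if_true]
    refine Finset.sum_congr rfl fun a _ => Finset.sum_congr rfl fun b _ => ?_
    rw [Finset.sum_mul]
    refine Finset.sum_congr rfl fun c _ => ?_
    rw [← hsym c c a b]
  rw [h]
  refine Finset.sum_eq_zero fun a _ => Finset.sum_eq_zero fun b _ => ?_
  rw [htr, zero_mul]

lemma Bq_std (i j k l : Fin n) :
    Bq S (single j i 1) (single l k 1) = S i j k l := by
  simp [Bq, Matrix.single, ite_and, mul_ite, ite_mul, Finset.sum_ite_eq,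
    Finset.sum_ite_eq']

end Bilinear

section Norm

variable (η τ : Matrix (Fin n) (Fin n) ℂ)

lemma Nn_nonneg : 0 ≤ Nn η :=
  Finset.sum_nonneg fun _ _ => Finset.sum_nonneg fun _ _ => Complex.normSq_nonneg _

lemma trace_sq_re (h : η.IsHermitian) : (Matrix.trace (η * η)).re = Nn η := by
  have h2 : Matrix.trace (η * η) = ((Nn η : ℝ) : ℂ) := by
    simp only [Matrix.trace, Matrix.diag, Matrix.mul_apply, Nn]
    push_cast
    refine Finset.sum_congr rfl fun a _ => Finset.sum_congr rfl fun b _ => ?_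
    rw [← h.apply b a]
    rw [show star (η a b) = starRingEnd ℂ (η a b) from rfl, Complex.mul_conj]
  rw [h2, Complex.ofReal_re]

lemma Nn_par : Nn (η + τ) + Nn (η - τ) = 2 * Nn η + 2 * Nn τ := by
  simp only [Nn, ← Finset.sum_add_distrib, Finset.mul_sum]
  refine Finset.sum_congr rfl fun a _ => Finset.sum_congr rfl fun b _ => ?_
  simp only [Matrix.add_apply, Matrix.sub_apply, Complex.normSq_apply, Complex.add_re,
    Complex.add_im, Complex.sub_re, Complex.sub_im]
  ring

lemma Nn_entry_le (a b : Fin n) : Complex.normSq (η a b) ≤ Nn η := by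
  have h1 : Complex.normSq (η a b) ≤ ∑ b', Complex.normSq (η a b') :=
    Finset.single_le_sum (f := fun b' => Complex.normSq (η a b'))
      (fun _ _ => Complex.normSq_nonneg _) (Finset.mem_univ b)
  refine h1.trans ?_
  exact Finset.single_le_sum (f := fun a' => ∑ b', Complex.normSq (η a' b'))
      (fun _ _ => Finset.sum_nonneg fun _ _ => Complex.normSq_nonneg _) (Finset.mem_univ a)

lemma Nn_le_of_entry (r : ℝ) (hr : ∀ a b, ‖η a b‖ ≤ r) :
    Nn η ≤ n ^ 2 * r ^ 2 := by
  have h : Nn η ≤ ∑ _a : Fin n, ∑ _b : Fin n, r ^ 2 := by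
    refine Finset.sum_le_sum fun a _ => Finset.sum_le_sum fun b _ => ?_
    rw [← Complex.sq_norm]
    have h0 := norm_nonneg (η a b)
    nlinarith [hr a b]
  calc Nn η ≤ _ := h
    _ = (n : ℝ) ^ 2 * r ^ 2 := by simp [Finset.sum_const]; ring

lemma Nn_zero_entries (h : Nn η = 0) (a b : Fin n) : η a b = 0 := by
  have h1 : ∀ a' ∈ Finset.univ, ∑ b', Complex.normSq (η a' b') = 0 := by
    intro a' _
    have h3 := (Finset.sum_eq_zero_iff_of_nonneg (fun _ _ =>
      Finset.sum_nonneg fun _ _ => Complex.normSq_nonneg _)).1 h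
    exact h3 a' (Finset.mem_univ a')
  have h2 := (Finset.sum_eq_zero_iff_of_nonneg (fun _ _ => Complex.normSq_nonneg _)).1
    (h1 a (Finset.mem_univ a)) b (Finset.mem_univ b)
  exact Complex.normSq_eq_zero.1 h2

end Norm

section TestMatrices

open Matrix

variable {n : ℕ}

noncomputable def Am (n : ℕ) (p q : Fin n) : Matrix (Fin n) (Fin n) ℂ :=
  single q p 1 + single p q 1
    - ((((if p = q then 2 else 0 : ℝ)) / n : ℝ) : ℂ) • 1

noncomputable def Cm (n : ℕ) (p q : Fin n) : Matrix (Fin n) (Fin n) ℂ :=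
  Complex.I • (single q p 1 - single p q 1)

lemma std_conjT (p q : Fin n) :
    (single q p (1 : ℂ))ᴴ = single p q 1 := by
  ext a b
  simp [conjTranspose_apply, single, apply_ite (starRingEnd ℂ), and_comm]

lemma Am_herm (p q : Fin n) : (Am n p q).IsHermitian := by
  unfold Matrix.IsHermitian
  rw [Am, conjTranspose_sub, conjTranspose_add, std_conjT, std_conjT, conjTranspose_smul,
    conjTranspose_one]
  rw [show star ((((if p = q then 2 else 0 : ℝ)) / n : ℝ) : ℂ)
      = ((((if p = q then 2 else 0 : ℝ)) / n : ℝ) : ℂ) from Complex.conj_ofReal _]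
  congr 1
  abel

lemma Cm_herm (p q : Fin n) : (Cm n p q).IsHermitian := by
  unfold Matrix.IsHermitian
  rw [Cm, conjTranspose_smul, conjTranspose_sub, std_conjT, std_conjT]
  rw [show star Complex.I = -Complex.I by rw [Complex.star_def, Complex.conj_I]]
  rw [neg_smul, smul_sub, smul_sub]
  abel

lemma std_trace (p q : Fin n) :
    Matrix.trace (single q p (1 : ℂ)) = if p = q then 1 else 0 := by
  simp [Matrix.trace, Matrix.diag, single, Finset.sum_ite_eq', ite_and, eq_comm]

lemma Am_trace (hn : 2 ≤ n) (p q : Fin n) : Matrix.trace (Am n p q) = 0 := by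
  have hn0 : (n : ℂ) ≠ 0 := by
    simp only [ne_eq, Nat.cast_eq_zero]; omega
  rw [Am, trace_sub, trace_add, std_trace, std_trace, trace_smul, trace_one]
  by_cases h : p = q
  · subst h
    simp only [if_pos rfl, smul_eq_mul]
    push_cast
    field_simp
    norm_num
  · rw [if_neg h, if_neg (fun hq => h hq.symm)]
    simp [h]

lemma Cm_trace (p q : Fin n) : Matrix.trace (Cm n p q) = 0 := by
  rw [Cm, trace_smul, trace_sub, std_trace, std_trace]
  by_cases h : p = q
  · subst h; simp
  · rw [if_neg h, if_neg (fun hq => h hq.symm)]; simp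

lemma std_abs_le (p q a b : Fin n) : ‖single q p (1:ℂ) a b‖ ≤ 1 := by
  simp only [single, of_apply]
  split_ifs <;> simp

lemma Am_entry (hn : 2 ≤ n) (p q a b : Fin n) : ‖Am n p q a b‖ ≤ 3 := by
  have h1 : ‖((((if p = q then 2 else 0 : ℝ)) / n : ℝ) : ℂ)
      • ((1 : Matrix (Fin n) (Fin n) ℂ) a b)‖ ≤ 1 := by
    rw [smul_eq_mul, norm_mul]
    have h2' : |(if p = q then 2 else 0 : ℝ)| ≤ (n : ℝ) := by
      split_ifs with h
      · rw [abs_of_nonneg (by norm_num)]; exact_mod_cast hn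
      · rw [abs_zero]; positivity
    have h2 : ‖((((if p = q then 2 else 0 : ℝ)) / n : ℝ) : ℂ)‖ ≤ 1 := by
      rw [Complex.norm_real, Real.norm_eq_abs, abs_div, abs_of_nonneg (show (0:ℝ) ≤ n by positivity),
        div_le_one (by exact_mod_cast by omega : (0:ℝ) < n)]
      exact h2'
    have h3 : ‖(1 : Matrix (Fin n) (Fin n) ℂ) a b‖ ≤ 1 := by
      simp only [Matrix.one_apply]; split_ifs <;> simp
    calc _ ≤ 1 * 1 := mul_le_mul h2 h3 (norm_nonneg _) zero_le_one
      _ = 1 := by ring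
  have ha := std_abs_le p q a b
  have hb := std_abs_le q p a b
  calc ‖Am n p q a b‖
      = ‖single q p 1 a b + single p q 1 a b
        - ((((if p = q then 2 else 0 : ℝ)) / n : ℝ) : ℂ)
          • ((1 : Matrix (Fin n) (Fin n) ℂ) a b)‖ := by rw [Am]; rfl
    _ ≤ _ := by
        refine (norm_sub_le _ _).trans ?_
        have := norm_add_le (single q p (1:ℂ) a b) (single p q 1 a b)
        linarith

lemma Cm_entry (p q a b : Fin n) : ‖Cm n p q a b‖ ≤ 3 := by
  have h1 := std_abs_le p q a b
  have h2 := std_abs_le q p a b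
  calc ‖Cm n p q a b‖
      = ‖single q p (1:ℂ) a b - single p q 1 a b‖ := by
        rw [Cm, Matrix.smul_apply, Matrix.sub_apply, smul_eq_mul, norm_mul,
          Complex.norm_I, one_mul]
    _ ≤ _ := (norm_sub_le _ _).trans (by linarith)

lemma std_decomp (hn : 2 ≤ n) (p q : Fin n) :
    single q p (1 : ℂ) = (1/2 : ℂ) • Am n p q + (-(Complex.I)/2) • Cm n p q
      + ((((if p = q then 1 else 0 : ℝ)) / n : ℝ) : ℂ) • 1 := by
  have hI : (-(Complex.I)/2) * Complex.I = (1/2 : ℂ) := by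
    rw [div_mul_eq_mul_div, neg_mul, Complex.I_mul_I]; norm_num
  have hr : ((((if p = q then 2 else 0 : ℝ)) / n : ℝ) : ℂ)
      = 2 * ((((if p = q then 1 else 0 : ℝ)) / n : ℝ) : ℂ) := by
    split_ifs <;> simp <;> ring
  rw [Am, Cm, smul_smul, hI, hr]
  module

end TestMatrices


section MainBounds

variable {n : ℕ}

lemma Qq_le (S : Fin n → Fin n → Fin n → Fin n → ℂ) (M : ℝ) (hM0 : 0 ≤ M)
    (hmem : ∀ η : Matrix (Fin n) (Fin n) ℂ, η.IsHermitian → η.trace = 0 →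
      (Matrix.trace (η * η)).re = 1 → ‖Bq S η η‖ ≤ M)
    (η : Matrix (Fin n) (Fin n) ℂ) (hherm : η.IsHermitian) (htr0 : η.trace = 0) :
    ‖Bq S η η‖ ≤ M * Nn η := by
  rcases eq_or_lt_of_le (Nn_nonneg η) with h0 | hpos
  · have hz : Bq S η η = 0 := by
      refine Finset.sum_eq_zero fun a _ => Finset.sum_eq_zero fun b _ =>
        Finset.sum_eq_zero fun c _ => Finset.sum_eq_zero fun d _ => ?_
      rw [Nn_zero_entries η h0.symm b a]
      ring
    rw [hz, ← h0]
    simp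
  · set t := Nn η with ht
    have hts : 0 < Real.sqrt t := Real.sqrt_pos.2 hpos
    set c : ℝ := (Real.sqrt t)⁻¹ with hc
    have hc0 : 0 < c := inv_pos.2 hts
    have hc2 : c ^ 2 = t⁻¹ := by
      rw [hc, inv_pow, Real.sq_sqrt hpos.le]
    set η' := (c : ℂ) • η with hη'
    have hherm' : η'.IsHermitian := by
      unfold Matrix.IsHermitian at hherm ⊢
      rw [hη', Matrix.conjTranspose_smul,
        show star (c:ℂ) = (c:ℂ) from Complex.conj_ofReal _, hherm]
    have htr' : η'.trace = 0 := by rw [hη', Matrix.trace_smul, htr0, smul_zero]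
    have hN' : Nn η' = c ^ 2 * Nn η := by
      simp only [Nn, hη', Matrix.smul_apply, smul_eq_mul, Complex.normSq_mul,
        Complex.normSq_ofReal, Finset.mul_sum]
      refine Finset.sum_congr rfl fun a _ => Finset.sum_congr rfl fun b _ => ?_
      ring
    have hre' : (Matrix.trace (η' * η')).re = 1 := by
      rw [trace_sq_re η' hherm', hN', hc2, ← ht, inv_mul_cancel₀ hpos.ne']
    have hb := hmem η' hherm' htr' hre'
    rw [hη', Qq_smul] at hb
    rw [norm_mul, norm_pow, Complex.norm_real, Real.norm_eq_abs, abs_of_pos hc0, hc2] at hb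
    have h3 : t * (t⁻¹ * ‖Bq S η η‖) = ‖Bq S η η‖ := by
      field_simp
    have h4 := mul_le_mul_of_nonneg_left hb hpos.le
    rw [h3] at h4
    linarith

lemma B2_le (S : Fin n → Fin n → Fin n → Fin n → ℂ) (M : ℝ) (hM0 : 0 ≤ M)
    (hmem : ∀ η : Matrix (Fin n) (Fin n) ℂ, η.IsHermitian → η.trace = 0 →
      (Matrix.trace (η * η)).re = 1 → ‖Bq S η η‖ ≤ M)
    (η τ : Matrix (Fin n) (Fin n) ℂ) (hη : η.IsHermitian) (hτ : τ.IsHermitian)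
    (h1 : η.trace = 0) (h2 : τ.trace = 0) :
    ‖Bq S η τ + Bq S τ η‖ ≤ M * (Nn η + Nn τ) := by
  have hid : Bq S η τ + Bq S τ η
      = (Bq S (η + τ) (η + τ) - Bq S (η - τ) (η - τ)) / 2 := by
    rw [Qq_add, Qq_sub]; ring
  have ha := Qq_le S M hM0 hmem (η + τ) (hη.add hτ)
    (by rw [Matrix.trace_add, h1, h2, add_zero])
  have hb := Qq_le S M hM0 hmem (η - τ) (hη.sub hτ)
    (by rw [Matrix.trace_sub, h1, h2, sub_zero])
  have hpar := Nn_par η τ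
  have htri := norm_sub_le (Bq S (η + τ) (η + τ)) (Bq S (η - τ) (η - τ))
  have h3 : M * Nn (η + τ) + M * Nn (η - τ) = M * (2 * Nn η + 2 * Nn τ) := by
    rw [← mul_add, hpar]
  rw [hid, norm_div, Complex.norm_two]
  linarith

lemma exists_mem (hn : 2 ≤ n) :
    ∃ η : Matrix (Fin n) (Fin n) ℂ, η.IsHermitian ∧ η.trace = 0 ∧
      (Matrix.trace (η * η)).re = 1 := by
  have h0 : (0 : ℕ) < n := by omega
  have h1 : (1 : ℕ) < n := by omega
  set e0 : Fin n := ⟨0, h0⟩ with he0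
  set e1 : Fin n := ⟨1, h1⟩ with he1
  have hne : e0 ≠ e1 := Fin.ne_of_val_ne (by norm_num)
  set s : ℝ := (Real.sqrt 2)⁻¹ with hs
  have hs2 : s ^ 2 = 2⁻¹ := by
    rw [hs, inv_pow, Real.sq_sqrt (by norm_num : (0:ℝ) ≤ 2)]
  set v : Fin n → ℂ := fun a => if a = e0 then (s:ℂ) else if a = e1 then -(s:ℂ) else 0
    with hv
  have hpoint : ∀ a, v a
      = (if a = e0 then (s:ℂ) else 0) + (if a = e1 then -(s:ℂ) else 0) := by
    intro a
    rcases eq_or_ne a e0 with h1' | h1'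
    · subst h1'
      simp [hv, hne]
    · simp [hv, h1']
  refine ⟨Matrix.diagonal v, ?_, ?_, ?_⟩
  · unfold Matrix.IsHermitian
    rw [Matrix.diagonal_conjTranspose]
    have hstar : star v = v := by
      funext a
      rw [Pi.star_apply]
      simp only [hv]
      split_ifs <;> simp [Complex.star_def, Complex.conj_ofReal]
    rw [hstar]
  · rw [Matrix.trace_diagonal]
    calc ∑ a, v a
        = ∑ a, ((if a = e0 then (s:ℂ) else 0) + (if a = e1 then -(s:ℂ) else 0)) :=
          Finset.sum_congr rfl fun a _ => hpoint a
      _ = 0 := by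
          rw [Finset.sum_add_distrib,
            Finset.sum_ite_eq' Finset.univ e0 fun _ => (s:ℂ),
            Finset.sum_ite_eq' Finset.univ e1 fun _ => -(s:ℂ)]
          simp
  · rw [Matrix.diagonal_mul_diagonal, Matrix.trace_diagonal]
    have hpt : ∀ a, v a * v a
        = (if a = e0 then ((s:ℂ))^2 else 0) + (if a = e1 then ((s:ℂ))^2 else 0) := by
      intro a
      rcases eq_or_ne a e0 with h1' | h1'
      · subst h1'
        simp [hv, hne]
        ring
      · rcases eq_or_ne a e1 with h2' | h2'
        · subst h2'
          simp [hv, h1']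
          ring
        · simp [hv, h1', h2']
    have hsum : ∑ a, v a * v a = ((s:ℂ))^2 + ((s:ℂ))^2 := by
      rw [Finset.sum_congr rfl fun a _ => hpt a, Finset.sum_add_distrib,
        Finset.sum_ite_eq' Finset.univ e0 fun _ => ((s:ℂ))^2,
        Finset.sum_ite_eq' Finset.univ e1 fun _ => ((s:ℂ))^2]
      simp
    rw [hsum, ← Complex.ofReal_pow, ← Complex.ofReal_add, Complex.ofReal_re, hs2]
    norm_num

end MainBounds

end TensorAux

open TensorAux Matrix

/-- Quantitative form of parts (2) and (3) of the proof of Theorem 1.2: there is a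
dimensional constant `C n > 0` such that for every `n ≥ 2`, every component of a 4-index
tensor `S` on `ℂ^n` satisfying the pair symmetry, the reality condition and the trace-free
condition is bounded by `C n` times the supremum of `|S(η,η)|` over unit-norm trace-zero
Hermitian matrices `η`. -/
theorem tensor_bounded_by_quadratic_form :
    ∃ C : ℕ → ℝ, (∀ n, 0 < C n) ∧
      ∀ (n : ℕ), 2 ≤ n → ∀ S : Fin n → Fin n → Fin n → Fin n → ℂ,
        (∀ i j k l, S i j k l = S k l i j) →
        (∀ i j k l, starRingEnd ℂ (S i j k l) = S j i l k) →
        (∀ c d : Fin n, ∑ a, S a a c d = 0) →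
        ∀ i j k l : Fin n, ‖S i j k l‖ ≤ C n *
          sSup {x : ℝ | ∃ η : Matrix (Fin n) (Fin n) ℂ, η.IsHermitian ∧ η.trace = 0 ∧
            (Matrix.trace (η * η)).re = 1 ∧
            x = ‖∑ a, ∑ b, ∑ c, ∑ d, S a b c d * η b a * η d c‖} := by
  classical
  refine ⟨fun n => 40 * ((n : ℝ) ^ 2 + 1), fun n => by positivity, ?_⟩
  intro n hn S hsym hreal htr i j k l
  set M := sSup {x : ℝ | ∃ η : Matrix (Fin n) (Fin n) ℂ, η.IsHermitian ∧ η.trace = 0 ∧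
      (Matrix.trace (η * η)).re = 1 ∧
      x = ‖∑ a, ∑ b, ∑ c, ∑ d, S a b c d * η b a * η d c‖} with hMdef
  have hbdd : BddAbove {x : ℝ | ∃ η : Matrix (Fin n) (Fin n) ℂ, η.IsHermitian ∧ η.trace = 0 ∧
      (Matrix.trace (η * η)).re = 1 ∧
      x = ‖∑ a, ∑ b, ∑ c, ∑ d, S a b c d * η b a * η d c‖} := by
    refine ⟨∑ a, ∑ b, ∑ c, ∑ d, ‖S a b c d‖, ?_⟩
    rintro x ⟨η, hherm, -, hre, rfl⟩
    have hN1 : Nn η = 1 := by rw [← trace_sq_re η hherm]; exact hre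
    have hent : ∀ a b : Fin n, ‖η a b‖ ≤ 1 := by
      intro a b
      have h2 := Nn_entry_le η a b
      rw [hN1] at h2
      nlinarith [Complex.sq_norm (η a b), norm_nonneg (η a b)]
    calc ‖∑ a, ∑ b, ∑ c, ∑ d, S a b c d * η b a * η d c‖
        ≤ ∑ a, ∑ b, ∑ c, ∑ d, ‖S a b c d * η b a * η d c‖ := by
          refine (norm_sum_le _ _).trans (Finset.sum_le_sum fun a _ => ?_)
          refine (norm_sum_le _ _).trans (Finset.sum_le_sum fun b _ => ?_)
          refine (norm_sum_le _ _).trans (Finset.sum_le_sum fun c _ => ?_)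
          exact norm_sum_le _ _
      _ ≤ ∑ a, ∑ b, ∑ c, ∑ d, ‖S a b c d‖ := by
          refine Finset.sum_le_sum fun a _ => Finset.sum_le_sum fun b _ =>
            Finset.sum_le_sum fun c _ => Finset.sum_le_sum fun d _ => ?_
          rw [norm_mul, norm_mul]
          have n1 := norm_nonneg (S a b c d)
          have n2 := norm_nonneg (η b a)
          have n3 := norm_nonneg (η d c)
          calc ‖S a b c d‖ * ‖η b a‖ * ‖η d c‖
              ≤ ‖S a b c d‖ * 1 * 1 :=
                mul_le_mul (mul_le_mul le_rfl (hent b a) n2 n1) (hent d c) n3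
                  (mul_nonneg n1 zero_le_one)
            _ = ‖S a b c d‖ := by ring
  have hmem : ∀ η : Matrix (Fin n) (Fin n) ℂ, η.IsHermitian → η.trace = 0 →
      (Matrix.trace (η * η)).re = 1 → ‖Bq S η η‖ ≤ M :=
    fun η h1 h2 h3 => le_csSup hbdd ⟨η, h1, h2, h3, rfl⟩
  have hM0 : 0 ≤ M := by
    obtain ⟨η0, h1, h2, h3⟩ := exists_mem (n := n) hn
    exact (norm_nonneg _).trans (le_csSup hbdd ⟨η0, h1, h2, h3, rfl⟩)
  -- bound on symmetrized bilinear form evaluated on the test matrices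
  have hP : ∀ X Y : Matrix (Fin n) (Fin n) ℂ, X.IsHermitian → Y.IsHermitian →
      X.trace = 0 → Y.trace = 0 → Nn X ≤ (n:ℝ)^2 * 3^2 → Nn Y ≤ (n:ℝ)^2 * 3^2 →
      ‖Bq S X Y + Bq S Y X‖ ≤ M * (2 * ((n:ℝ)^2 * 3^2)) := by
    intro X Y h1 h2 h3 h4 h5 h6
    refine (B2_le S M hM0 hmem X Y h1 h2 h3 h4).trans ?_
    exact mul_le_mul_of_nonneg_left (by linarith) hM0
  have hBl : ∀ τ : Matrix (Fin n) (Fin n) ℂ, Bq S 1 τ = 0 := fun τ => Bq_one_left S τ htr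
  have hBr : ∀ σ : Matrix (Fin n) (Fin n) ℂ, Bq S σ 1 = 0 :=
    fun σ => Bq_one_right S σ hsym htr
  have e1 : S i j k l = Bq S (Matrix.single j i 1) (Matrix.single l k 1) :=
    (Bq_std S i j k l).symm
  have e2 : S i j k l = Bq S (Matrix.single l k 1) (Matrix.single j i 1) := by
    rw [hsym i j k l]; exact (Bq_std S k l i j).symm
  have hE1 : Bq S (Matrix.single j i 1) (Matrix.single l k 1)
      = (1/2:ℂ)*(1/2:ℂ) * Bq S (Am n i j) (Am n k l)
        + (1/2:ℂ)*(-(Complex.I)/2) * Bq S (Am n i j) (Cm n k l)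
        + (-(Complex.I)/2)*(1/2:ℂ) * Bq S (Cm n i j) (Am n k l)
        + (-(Complex.I)/2)*(-(Complex.I)/2) * Bq S (Cm n i j) (Cm n k l) := by
    rw [std_decomp hn i j, std_decomp hn k l]
    simp only [Bq_add_left, Bq_add_right, Bq_smul_left, Bq_smul_right, hBl, hBr,
      mul_zero, zero_add, add_zero]
    ring
  have hE2 : Bq S (Matrix.single l k 1) (Matrix.single j i 1)
      = (1/2:ℂ)*(1/2:ℂ) * Bq S (Am n k l) (Am n i j)
        + (1/2:ℂ)*(-(Complex.I)/2) * Bq S (Am n k l) (Cm n i j)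
        + (-(Complex.I)/2)*(1/2:ℂ) * Bq S (Cm n k l) (Am n i j)
        + (-(Complex.I)/2)*(-(Complex.I)/2) * Bq S (Cm n k l) (Cm n i j) := by
    rw [std_decomp hn k l, std_decomp hn i j]
    simp only [Bq_add_left, Bq_add_right, Bq_smul_left, Bq_smul_right, hBl, hBr,
      mul_zero, zero_add, add_zero]
    ring
  have hkey : 2 * S i j k l
      = (1/2:ℂ)*(1/2:ℂ) * (Bq S (Am n i j) (Am n k l) + Bq S (Am n k l) (Am n i j))
        + (1/2:ℂ)*(-(Complex.I)/2) * (Bq S (Am n i j) (Cm n k l) + Bq S (Cm n k l) (Am n i j))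
        + (1/2:ℂ)*(-(Complex.I)/2) * (Bq S (Cm n i j) (Am n k l) + Bq S (Am n k l) (Cm n i j))
        + (-(Complex.I)/2)*(-(Complex.I)/2)
          * (Bq S (Cm n i j) (Cm n k l) + Bq S (Cm n k l) (Cm n i j)) := by
    linear_combination e1 + e2 + hE1 + hE2
  -- coefficient absolute values
  have habs_half : ‖(1/2 : ℂ)‖ = 1/2 := by
    rw [norm_div, Complex.norm_two, norm_one]
  have habs_hI : ‖-(Complex.I)/2‖ = 1/2 := by
    rw [norm_div, norm_neg, Complex.norm_I, Complex.norm_two]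
  have hcoef : ∀ (u w : ℂ) (x : ℂ), ‖u‖ = 1/2 → ‖w‖ = 1/2 →
      ‖x‖ ≤ M * (2 * ((n:ℝ)^2 * 3^2)) →
      ‖u * w * x‖ ≤ (1/4) * (M * (2 * ((n:ℝ)^2 * 3^2))) := by
    intro u w x hu hw hx
    rw [norm_mul, norm_mul, hu, hw]
    have hx0 := norm_nonneg x
    nlinarith
  -- the norm bounds for the test matrices
  have hNA : ∀ p q : Fin n, Nn (Am n p q) ≤ (n:ℝ)^2 * 3^2 :=
    fun p q => Nn_le_of_entry (Am n p q) 3 (fun a b => Am_entry hn p q a b)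
  have hNC : ∀ p q : Fin n, Nn (Cm n p q) ≤ (n:ℝ)^2 * 3^2 :=
    fun p q => Nn_le_of_entry (Cm n p q) 3 (fun a b => Cm_entry p q a b)
  have b1 := hcoef _ _ _ habs_half habs_half
    (hP (Am n i j) (Am n k l) (Am_herm i j) (Am_herm k l) (Am_trace hn i j) (Am_trace hn k l)
      (hNA i j) (hNA k l))
  have b2 := hcoef _ _ _ habs_half habs_hI
    (hP (Am n i j) (Cm n k l) (Am_herm i j) (Cm_herm k l) (Am_trace hn i j) (Cm_trace k l)
      (hNA i j) (hNC k l))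
  have b3 := hcoef _ _ _ habs_half habs_hI
    (hP (Cm n i j) (Am n k l) (Cm_herm i j) (Am_herm k l) (Cm_trace i j) (Am_trace hn k l)
      (hNC i j) (hNA k l))
  have b4 := hcoef _ _ _ habs_hI habs_hI
    (hP (Cm n i j) (Cm n k l) (Cm_herm i j) (Cm_herm k l) (Cm_trace i j) (Cm_trace k l)
      (hNC i j) (hNC k l))
  have htri : ∀ w x y z : ℂ, ‖w + x + y + z‖
      ≤ ‖w‖ + ‖x‖ + ‖y‖ + ‖z‖ := by
    intro w x y z
    calc ‖w + x + y + z‖ ≤ ‖w + x + y‖ + ‖z‖ :=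
          norm_add_le _ _
      _ ≤ ‖w + x‖ + ‖y‖ + ‖z‖ := by
          linarith [norm_add_le (w + x) y]
      _ ≤ _ := by linarith [norm_add_le w x]
  have hfin : ‖2 * S i j k l‖ ≤ 4 * ((1/4) * (M * (2 * ((n:ℝ)^2 * 3^2)))) := by
    rw [hkey]
    refine (htri _ _ _ _).trans ?_
    linarith
  rw [norm_mul, Complex.norm_two] at hfin
  have hn2 : (0:ℝ) ≤ (n:ℝ)^2 := sq_nonneg _
  have hgoal : ‖S i j k l‖ ≤ 40 * ((n:ℝ)^2 + 1) * M := by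
    nlinarith [mul_nonneg hM0 hn2]
  exact hgoal
end
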